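/- Let R ∈ ℕ with R ≥ 2, and let p_c ∈ ℝ with 1/R ≤ p_c ≤ 1/4. Set w = 2·p_c·R and let U = {x ∈ Bool^R : |x| ≤ w}, where |x| denotes the Hamming weight (number of true coordinates) of x. Let q be the product Bernoulli(p_c) distribution on Bool^R, q(x) = p_c^{|x|}·(1 − p_c)^{R−|x|}. Let δ ∈ ℝ satisfy 2·exp(−p_c·R/3) < δ ≤ 1, set N = (R : ℝ)^w (real power), and define q_δ on Option (Bool^R) by: q_δ(some x) = (δ/N)·⌊q(x)·N/δ⌋ for x ∈ U, q_δ(some x) = 0 for x ∉ U, and q_δ(none) = 1 − ∑_{x ∈ U} q_δ(some x). Then q_δ is a probability distribution (all values are in [0,1] and it sums to 1), it assigns zero mass to every string of Hamming weight greater than w, and the statistical distance between q_δ and the distribution q (extended to Option (Bool^R) by assigning mass 0 to none) is at most 2δ. -/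

import Mathlib

open Finset

/-- Hamming weight of a Boolean string of length `R`. -/
def hamWt {R : ℕ} (x : Fin R → Bool) : ℕ :=
  (Finset.univ.filter fun i => x i = true).card

/-- The product Bernoulli(`pc`) density on `Bool^R`. -/
noncomputable def qBer (R : ℕ) (pc : ℝ) (x : Fin R → Bool) : ℝ :=
  pc ^ hamWt x * (1 - pc) ^ (R - hamWt x)

/-- The discretized distribution `q_δ` on `Option (Bool^R)`:
on strings of Hamming weight at most `w = 2·pc·R` it takes the value
`(δ/N)·⌊q(x)·N/δ⌋` where `N = R^w` (real power), it vanishes on heavier strings,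
and the leftover mass is assigned to the fail symbol `none`. -/
noncomputable def qDisc (R : ℕ) (pc δ : ℝ) : Option (Fin R → Bool) → ℝ
  | some x =>
      if (hamWt x : ℝ) ≤ 2 * pc * R then
        (δ / (R : ℝ) ^ (2 * pc * (R : ℝ))) *
          ⌊qBer R pc x * (R : ℝ) ^ (2 * pc * (R : ℝ)) / δ⌋
      else 0
  | none =>
      1 - ∑ x : Fin R → Bool,
        (if (hamWt x : ℝ) ≤ 2 * pc * R then
          (δ / (R : ℝ) ^ (2 * pc * (R : ℝ))) *
            ⌊qBer R pc x * (R : ℝ) ^ (2 * pc * (R : ℝ)) / δ⌋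
        else 0)

/-- The Bernoulli density extended to `Option (Bool^R)` by giving mass `0` to `none`. -/
noncomputable def qExt (R : ℕ) (pc : ℝ) : Option (Fin R → Bool) → ℝ
  | some x => qBer R pc x
  | none => 0

/-- Statistical (total variation) distance between two distributions. -/
noncomputable def statDist {α : Type*} [Fintype α] (p q : α → ℝ) : ℝ :=
  (∑ a, |p a - q a|) / 2

lemma sum_choose_le (R : ℕ) (hR : 4 ≤ R) : ∀ m : ℕ, 2 ≤ m →
    ∑ k ∈ Finset.range (m+1), R.choose k ≤ R ^ m := by
  intro m hm
  induction m, hm using Nat.le_induction with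
  | base =>
    have hc2 : 2 * R.choose 2 ≤ R ^ 2 := by
      have h := Nat.descFactorial_le_pow R 2
      rw [Nat.descFactorial_eq_factorial_mul_choose] at h
      simpa [Nat.factorial] using h
    have h4 : 4 * R ≤ R ^ 2 := by
      have := Nat.mul_le_mul_right R hR
      nlinarith
    simp [Finset.sum_range_succ]
    omega
  | succ m hm ih =>
    rw [Finset.sum_range_succ]
    have hd : 6 * R.choose (m+1) ≤ R ^ (m+1) := by
      have h1 : Nat.factorial (m+1) * R.choose (m+1) ≤ R ^ (m+1) := by
        rw [← Nat.descFactorial_eq_factorial_mul_choose]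
        exact Nat.descFactorial_le_pow R (m+1)
      have h2 : 6 ≤ Nat.factorial (m+1) := by
        calc 6 = Nat.factorial 3 := rfl
        _ ≤ Nat.factorial (m+1) := Nat.factorial_le (by omega)
      exact le_trans (Nat.mul_le_mul_right _ h2) h1
    have hstep : 6 * R ^ m ≤ 5 * R ^ (m+1) := by
      have : 2 * R ^ m ≤ R * R ^ m := Nat.mul_le_mul_right _ (by omega)
      rw [pow_succ]
      nlinarith
    have h6 : 6 * ((∑ k ∈ Finset.range (m+1), R.choose k) + R.choose (m+1)) ≤ 6 * R ^ (m+1) := by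
      have := Nat.mul_le_mul_left 6 ih
      omega
    omega

lemma card_hamWt_le (R m : ℕ) (hR : 4 ≤ R) (hm : 2 ≤ m) :
    ((univ : Finset (Fin R → Bool)).filter fun x => hamWt x ≤ m).card ≤ R ^ m := by
  have hinj : ((univ : Finset (Fin R → Bool)).filter fun x => hamWt x ≤ m).card ≤
      ((univ : Finset (Finset (Fin R))).filter fun S => S.card ≤ m).card := by
    apply Finset.card_le_card_of_injOn (fun x => univ.filter fun i => x i = true)
    · intro x hx
      simp only [Finset.mem_coe, Finset.mem_filter, Finset.mem_univ, true_and] at hx ⊢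
      exact hx
    · intro x _ y _ h
      funext i
      have := Finset.ext_iff.mp h i
      simp only [Finset.mem_filter, Finset.mem_univ, true_and] at this
      rcases Bool.eq_false_or_eq_true (x i) with h1 | h1 <;>
        rcases Bool.eq_false_or_eq_true (y i) with h2 | h2 <;> simp_all
  have hcard : ((univ : Finset (Finset (Fin R))).filter fun S => S.card ≤ m) =
      (Finset.range (m+1)).biUnion (fun k => Finset.powersetCard k univ) := by
    ext S
    simp [Finset.mem_powersetCard_univ, Nat.lt_succ_iff]
  have hdisj : ∀ k1 ∈ Finset.range (m+1), ∀ k2 ∈ Finset.range (m+1), k1 ≠ k2 →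
      Disjoint (Finset.powersetCard k1 (univ : Finset (Fin R))) (Finset.powersetCard k2 univ) := by
    intro k1 _ k2 _ hne
    rw [Finset.disjoint_left]
    intro S h1 h2
    rw [Finset.mem_powersetCard_univ] at h1 h2
    exact hne (h1 ▸ h2 ▸ rfl)
  calc ((univ : Finset (Fin R → Bool)).filter fun x => hamWt x ≤ m).card
      ≤ ((univ : Finset (Finset (Fin R))).filter fun S => S.card ≤ m).card := hinj
    _ = ∑ k ∈ Finset.range (m+1), (Finset.powersetCard k (univ : Finset (Fin R))).card := by
        rw [hcard, Finset.card_biUnion hdisj]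
    _ = ∑ k ∈ Finset.range (m+1), R.choose k := by
        simp [Finset.card_powersetCard]
    _ ≤ R ^ m := sum_choose_le R hR m hm

lemma qBer_mul_pow (R : ℕ) (pc c : ℝ) (x : Fin R → Bool) :
    qBer R pc x * c ^ hamWt x = ∏ i, (if x i then pc * c else 1 - pc) := by
  rw [← Finset.prod_filter_mul_prod_filter_not univ (fun i => x i = true)]
  have h1 : (∏ i ∈ univ.filter (fun i => x i = true), (if x i then pc * c else 1 - pc))
      = (pc * c) ^ hamWt x := by
    rw [Finset.prod_congr rfl (fun i hi => ?_), Finset.prod_const]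
    · rfl
    · simp only [Finset.mem_filter] at hi
      simp [hi.2]
  have h2 : (∏ i ∈ univ.filter (fun i => ¬ (x i = true)), (if x i then pc * c else 1 - pc))
      = (1 - pc) ^ (R - hamWt x) := by
    rw [Finset.prod_congr rfl (fun i hi => ?_), Finset.prod_const]
    · congr 1
      have := Finset.card_filter_add_card_filter_not (s := (univ : Finset (Fin R)))
        (fun i => x i = true)
      simp only [Finset.card_univ, Fintype.card_fin] at this
      have hle : hamWt x ≤ R := by
        have := Finset.card_filter_le (univ : Finset (Fin R)) (fun i => x i = true)
        simpa [hamWt, Finset.card_univ] using this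
      unfold hamWt
      omega
    · simp only [Finset.mem_filter] at hi
      simp [hi.2]
  rw [h1, h2, qBer, mul_pow]
  ring

lemma sum_qBer_mul_pow (R : ℕ) (pc c : ℝ) :
    ∑ x : Fin R → Bool, qBer R pc x * c ^ hamWt x = (pc * c + (1 - pc)) ^ R := by
  simp_rw [qBer_mul_pow]
  have h := Finset.prod_univ_sum (fun _ : Fin R => (univ : Finset Bool))
    (fun _ b => if b then pc * c else 1 - pc)
  rw [Fintype.piFinset_univ] at h
  rw [← h]
  simp [Fintype.sum_bool]

lemma sum_qBer (R : ℕ) (pc : ℝ) : ∑ x : Fin R → Bool, qBer R pc x = 1 := by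
  have h := sum_qBer_mul_pow R pc 1
  simpa using h

/-- Provided `δ > 2·exp(-pc·R/3)`, the discretization `q_δ` is a probability
distribution supported on strings of Hamming weight at most `2·pc·R` (plus the
fail symbol), and is within statistical distance `2δ` of the Bernoulli product
distribution `q`. -/
theorem qDisc_prob_and_close (R : ℕ) (hR : 2 ≤ R) (pc : ℝ)
    (hpc1 : 1 / (R : ℝ) ≤ pc) (hpc2 : pc ≤ 1 / 4)
    (δ : ℝ) (hδl : 2 * Real.exp (-(pc * R) / 3) < δ) (hδu : δ ≤ 1) :
    (∀ o : Option (Fin R → Bool), 0 ≤ qDisc R pc δ o ∧ qDisc R pc δ o ≤ 1) ∧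
    (∑ o : Option (Fin R → Bool), qDisc R pc δ o = 1) ∧
    (∀ x : Fin R → Bool, 2 * pc * R < (hamWt x : ℝ) → qDisc R pc δ (some x) = 0) ∧
    statDist (qDisc R pc δ) (qExt R pc) ≤ 2 * δ := by
  have hR0 : (0:ℝ) < R := by exact_mod_cast (by omega : 0 < R)
  have hpc0 : 0 < pc := lt_of_lt_of_le (by positivity) hpc1
  have hpcle1 : pc ≤ 1 := hpc2.trans (by norm_num)
  have hδ0 : 0 < δ := lt_trans (by positivity) hδl
  have hR4 : (4:ℝ) ≤ (R:ℝ) := by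
    have h14 : (1:ℝ)/(R:ℝ) ≤ 1/4 := hpc1.trans hpc2
    rw [div_le_div_iff₀ hR0 (by norm_num)] at h14
    linarith
  have hR4n : 4 ≤ R := by exact_mod_cast hR4
  set w : ℝ := 2 * pc * (R:ℝ) with hw
  have hpcR1 : 1 ≤ pc * R := by
    rw [div_le_iff₀ hR0] at hpc1; linarith
  have hw2 : (2:ℝ) ≤ w := by rw [hw]; nlinarith
  have hw0 : (0:ℝ) ≤ w := by linarith
  set N : ℝ := (R:ℝ) ^ w with hN
  have hN0 : 0 < N := Real.rpow_pos_of_pos hR0 w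
  set m := ⌊w⌋₊ with hm
  have hm2 : 2 ≤ m := Nat.le_floor (by exact_mod_cast hw2)
  set F : (Fin R → Bool) → ℝ := fun x => (δ / N) * ⌊qBer R pc x * N / δ⌋ with hF
  have hq0 : ∀ x, 0 ≤ qBer R pc x := fun x =>
    mul_nonneg (pow_nonneg hpc0.le _) (pow_nonneg (by linarith) _)
  have hF0 : ∀ x, 0 ≤ F x := by
    intro x
    apply mul_nonneg (by positivity)
    have h : (0:ℝ) ≤ qBer R pc x * N / δ := by
      apply div_nonneg (mul_nonneg (hq0 x) hN0.le) hδ0.le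
    exact_mod_cast Int.floor_nonneg.mpr h
  have hqid : ∀ x, (δ / N) * (qBer R pc x * N / δ) = qBer R pc x := by
    intro x; field_simp
  have hFle : ∀ x, F x ≤ qBer R pc x := by
    intro x
    have h1 : (⌊qBer R pc x * N / δ⌋ : ℝ) ≤ qBer R pc x * N / δ := Int.floor_le _
    calc F x ≤ (δ / N) * (qBer R pc x * N / δ) :=
          mul_le_mul_of_nonneg_left h1 (le_of_lt (div_pos hδ0 hN0))
      _ = qBer R pc x := hqid x
  have hdiff : ∀ x, qBer R pc x - F x ≤ δ / N := by
    intro x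
    have h1 : qBer R pc x * N / δ - 1 ≤ (⌊qBer R pc x * N / δ⌋ : ℝ) :=
      (Int.sub_one_lt_floor _).le
    have h2 : (δ / N) * (qBer R pc x * N / δ - (⌊qBer R pc x * N / δ⌋:ℝ)) ≤ (δ / N) * 1 :=
      mul_le_mul_of_nonneg_left (by linarith) (le_of_lt (div_pos hδ0 hN0))
    rw [mul_sub, hqid x, mul_one] at h2
    exact h2
  have hsum1 : ∑ x : Fin R → Bool, qBer R pc x = 1 := sum_qBer R pc
  have hqle1 : ∀ x, qBer R pc x ≤ 1 := by
    intro x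
    calc qBer R pc x ≤ ∑ y : Fin R → Bool, qBer R pc y :=
          Finset.single_le_sum (fun i _ => hq0 i) (Finset.mem_univ x)
      _ = 1 := hsum1
  have hsome : ∀ x, qDisc R pc δ (some x) = if (hamWt x:ℝ) ≤ w then F x else 0 := fun x => rfl
  set S := ∑ x : Fin R → Bool, (if (hamWt x:ℝ) ≤ w then F x else 0) with hS
  have hnone : qDisc R pc δ none = 1 - S := rfl
  have hterm_le : ∀ x, (if (hamWt x:ℝ) ≤ w then F x else 0) ≤ qBer R pc x := by
    intro x; split
    · exact hFle x
    · exact hq0 x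
  have hterm_0 : ∀ x, 0 ≤ (if (hamWt x:ℝ) ≤ w then F x else 0) := by
    intro x; split
    · exact hF0 x
    · exact le_refl 0
  have hS0 : 0 ≤ S := Finset.sum_nonneg (fun x _ => hterm_0 x)
  have hS1 : S ≤ 1 := by
    rw [← hsum1]
    exact Finset.sum_le_sum (fun x _ => hterm_le x)
  -- Chernoff bound
  have hT : ∑ x ∈ univ.filter (fun x : Fin R → Bool => ¬ ((hamWt x:ℝ) ≤ w)), qBer R pc x
      ≤ Real.exp (-(pc * R) / 3) := by
    set T := ∑ x ∈ univ.filter (fun x : Fin R → Bool => ¬ ((hamWt x:ℝ) ≤ w)), qBer R pc x with hTd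
    have h2w0 : (0:ℝ) < (2:ℝ) ^ w := Real.rpow_pos_of_pos (by norm_num) w
    have hTs : T * (2:ℝ) ^ w ≤ Real.exp (pc * R) := by
      have step1 : T * (2:ℝ) ^ w ≤
          ∑ x ∈ univ.filter (fun x : Fin R → Bool => ¬ ((hamWt x:ℝ) ≤ w)),
            qBer R pc x * (2:ℝ) ^ hamWt x := by
        rw [hTd, Finset.sum_mul]
        apply Finset.sum_le_sum
        intro x hx
        simp only [Finset.mem_filter] at hx
        have hgt : w ≤ (hamWt x : ℝ) := (not_le.mp hx.2).le
        have : (2:ℝ) ^ w ≤ (2:ℝ) ^ (hamWt x : ℝ) :=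
          Real.rpow_le_rpow_of_exponent_le one_le_two hgt
        rw [Real.rpow_natCast] at this
        exact mul_le_mul_of_nonneg_left this (hq0 x)
      have step2 : ∑ x ∈ univ.filter (fun x : Fin R → Bool => ¬ ((hamWt x:ℝ) ≤ w)),
            qBer R pc x * (2:ℝ) ^ hamWt x ≤
          ∑ x : Fin R → Bool, qBer R pc x * (2:ℝ) ^ hamWt x := by
        apply Finset.sum_le_sum_of_subset_of_nonneg (Finset.filter_subset _ _)
        intro x _ _
        exact mul_nonneg (hq0 x) (by positivity)
      have step3 : ∑ x : Fin R → Bool, qBer R pc x * (2:ℝ) ^ hamWt x = (1 + pc) ^ R := by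
        rw [sum_qBer_mul_pow]; ring_nf
      have step4 : (1 + pc) ^ R ≤ Real.exp (pc * R) := by
        have h1 : 1 + pc ≤ Real.exp pc := by linarith [Real.add_one_le_exp pc]
        calc (1 + pc) ^ R ≤ (Real.exp pc) ^ R := pow_le_pow_left₀ (by linarith) h1 R
          _ = Real.exp (pc * R) := by rw [← Real.exp_nat_mul]; ring_nf
      linarith
    have h2wexp : (2:ℝ) ^ w = Real.exp (Real.log 2 * w) := Real.rpow_def_of_pos (by norm_num) w
    have hfin : Real.exp (pc * R) / (2:ℝ) ^ w ≤ Real.exp (-(pc * R) / 3) := by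
      rw [h2wexp, ← Real.exp_sub]
      apply Real.exp_le_exp.mpr
      have hl : (0.6931471803:ℝ) < Real.log 2 := Real.log_two_gt_d9
      rw [hw]
      nlinarith [hpcR1, hl]
    calc T = T * (2:ℝ)^w / (2:ℝ)^w := by field_simp
      _ ≤ Real.exp (pc * R) / (2:ℝ)^w := by gcongr
      _ ≤ Real.exp (-(pc * R) / 3) := hfin
  have hTδ : ∑ x ∈ univ.filter (fun x : Fin R → Bool => ¬ ((hamWt x:ℝ) ≤ w)), qBer R pc x
      ≤ δ / 2 := by
    have := hδl
    linarith
  -- card bound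
  have hcondU : (univ.filter fun x : Fin R → Bool => (hamWt x:ℝ) ≤ w)
      = (univ.filter fun x : Fin R → Bool => hamWt x ≤ m) := by
    apply Finset.filter_congr
    intro x _
    exact (Nat.le_floor_iff hw0).symm
  have hU : (((univ.filter fun x : Fin R → Bool => (hamWt x:ℝ) ≤ w)).card : ℝ) ≤ N := by
    rw [hcondU]
    calc (((univ.filter fun x : Fin R → Bool => hamWt x ≤ m)).card : ℝ)
        ≤ ((R ^ m : ℕ) : ℝ) := by exact_mod_cast card_hamWt_le R m hR4n hm2
      _ = (R:ℝ) ^ (m : ℝ) := by rw [Nat.cast_pow, Real.rpow_natCast]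
      _ ≤ N := Real.rpow_le_rpow_of_exponent_le (by linarith) (Nat.floor_le hw0)
  have hsumU : ∑ x ∈ univ.filter (fun x : Fin R → Bool => (hamWt x:ℝ) ≤ w),
      (qBer R pc x - F x) ≤ δ := by
    calc ∑ x ∈ univ.filter (fun x : Fin R → Bool => (hamWt x:ℝ) ≤ w), (qBer R pc x - F x)
        ≤ ∑ _x ∈ univ.filter (fun x : Fin R → Bool => (hamWt x:ℝ) ≤ w), (δ / N) :=
          Finset.sum_le_sum (fun x _ => hdiff x)
      _ = ((univ.filter fun x : Fin R → Bool => (hamWt x:ℝ) ≤ w)).card * (δ / N) := by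
          rw [Finset.sum_const, nsmul_eq_mul]
      _ ≤ N * (δ / N) := mul_le_mul_of_nonneg_right hU (by positivity)
      _ = δ := by field_simp
  have hUnonneg : ∀ x ∈ univ.filter (fun x : Fin R → Bool => (hamWt x:ℝ) ≤ w),
      0 ≤ qBer R pc x - F x := fun x _ => by linarith [hFle x]
  -- key split
  have hkey : ∑ x : Fin R → Bool, (qBer R pc x - (if (hamWt x:ℝ) ≤ w then F x else 0))
      ≤ δ + δ / 2 := by
    rw [← Finset.sum_filter_add_sum_filter_not univ (fun x : Fin R → Bool => (hamWt x:ℝ) ≤ w)]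
    have e1 : ∑ x ∈ univ.filter (fun x : Fin R → Bool => (hamWt x:ℝ) ≤ w),
        (qBer R pc x - (if (hamWt x:ℝ) ≤ w then F x else 0))
        = ∑ x ∈ univ.filter (fun x : Fin R → Bool => (hamWt x:ℝ) ≤ w), (qBer R pc x - F x) := by
      apply Finset.sum_congr rfl
      intro x hx
      simp only [Finset.mem_filter] at hx
      rw [if_pos hx.2]
    have e2 : ∑ x ∈ univ.filter (fun x : Fin R → Bool => ¬((hamWt x:ℝ) ≤ w)),
        (qBer R pc x - (if (hamWt x:ℝ) ≤ w then F x else 0))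
        = ∑ x ∈ univ.filter (fun x : Fin R → Bool => ¬((hamWt x:ℝ) ≤ w)), qBer R pc x := by
      apply Finset.sum_congr rfl
      intro x hx
      simp only [Finset.mem_filter] at hx
      rw [if_neg hx.2, sub_zero]
    rw [e1, e2]
    linarith [hsumU, hTδ]
  have h1S : 1 - S = ∑ x : Fin R → Bool, (qBer R pc x - (if (hamWt x:ℝ) ≤ w then F x else 0)) := by
    rw [Finset.sum_sub_distrib, hsum1, ← hS]
  refine ⟨?_, ?_, ?_, ?_⟩
  · intro o
    cases o with
    | none =>
      rw [hnone]
      constructor <;> linarith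
    | some x =>
      rw [hsome]
      constructor
      · exact hterm_0 x
      · exact le_trans (hterm_le x) (hqle1 x)
  · rw [Fintype.sum_option]
    simp only [hsome, hnone]
    rw [← hS]
    ring
  · intro x hx
    rw [hsome, if_neg (not_le.mpr hx)]
  · rw [statDist, Fintype.sum_option]
    have habs_some : ∀ x : Fin R → Bool,
        |qDisc R pc δ (some x) - qExt R pc (some x)|
        = qBer R pc x - (if (hamWt x:ℝ) ≤ w then F x else 0) := by
      intro x
      have hqe : qExt R pc (some x) = qBer R pc x := rfl
      rw [hqe, hsome, abs_sub_comm, abs_of_nonneg (by linarith [hterm_le x])]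
    have hb1 : |qDisc R pc δ none - qExt R pc none| ≤ δ + δ / 2 := by
      have hqe : qExt R pc none = 0 := rfl
      rw [hqe, hnone, sub_zero, abs_of_nonneg (by linarith)]
      rw [h1S]; exact hkey
    have hb2 : ∑ x : Fin R → Bool, |qDisc R pc δ (some x) - qExt R pc (some x)| ≤ δ + δ / 2 := by
      calc ∑ x : Fin R → Bool, |qDisc R pc δ (some x) - qExt R pc (some x)|
          = ∑ x : Fin R → Bool, (qBer R pc x - (if (hamWt x:ℝ) ≤ w then F x else 0)) :=
            Finset.sum_congr rfl (fun x _ => habs_some x)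
        _ ≤ δ + δ / 2 := hkey
    linarith [hb1, hb2]
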